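/- Let W : ℝ^{n×n} → ℝ be continuous with growth |W(q)| ≤ C(1+|q|^p) and coercivity W(q) ≥ α|q|^p − β (α>0, p ∈ (1,∞)). Let Ω ⊂ ℝ^{n−k} be a bounded measurable set and G : Ω → ℝ^{n×(n−k)} a measurable map with G ∈ L^p. Then there exists a measurable map r₀ : Ω → ℝ^{n×k} with r₀ ∈ L^p(Ω; ℝ^{n×k}) such that for a.e. x ∈ Ω, W(G(x) | r₀(x)) = min_{r ∈ ℝ^{n×k}} W(G(x) | r). -/

import Mathlib

open MeasureTheory

/-- Juxtaposition `(q | r)` of blocks into a full matrix (columns `Fin m ⊕ Fin k`). -/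
def juxt (m k : ℕ) (q : Fin (m + k) → Fin m → ℝ) (r : Fin (m + k) → Fin k → ℝ) :
    Fin (m + k) → Fin m ⊕ Fin k → ℝ :=
  fun i => Sum.elim (q i) (r i)

open Set Filter Topology

lemma norm_le_juxt (m k : ℕ) (q : Fin (m + k) → Fin m → ℝ) (r : Fin (m + k) → Fin k → ℝ) :
    ‖r‖ ≤ ‖juxt m k q r‖ := by
  rw [pi_norm_le_iff_of_nonneg (norm_nonneg _)]
  intro i
  rw [pi_norm_le_iff_of_nonneg (norm_nonneg _)]
  intro j
  calc ‖r i j‖ = ‖juxt m k q r i (Sum.inr j)‖ := rfl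
  _ ≤ ‖juxt m k q r i‖ := norm_le_pi_norm _ _
  _ ≤ ‖juxt m k q r‖ := norm_le_pi_norm _ _

lemma juxt_zero_norm_le (m k : ℕ) (q : Fin (m + k) → Fin m → ℝ) :
    ‖juxt m k q 0‖ ≤ ‖q‖ := by
  rw [pi_norm_le_iff_of_nonneg (norm_nonneg _)]
  intro i
  rw [pi_norm_le_iff_of_nonneg (norm_nonneg _)]
  intro s
  rcases s with j | j
  · calc ‖juxt m k q 0 i (Sum.inl j)‖ = ‖q i j‖ := rfl
    _ ≤ ‖q i‖ := norm_le_pi_norm _ _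
    _ ≤ ‖q‖ := norm_le_pi_norm _ _
  · simp only [juxt, Sum.elim_inr]
    simpa using norm_nonneg q

lemma juxt_continuous (m k : ℕ) :
    Continuous fun p : (Fin (m + k) → Fin m → ℝ) × (Fin (m + k) → Fin k → ℝ) =>
      juxt m k p.1 p.2 := by
  apply continuous_pi
  intro i
  apply continuous_pi
  intro s
  rcases s with j | j
  · exact ((continuous_apply j).comp ((continuous_apply i).comp continuous_fst))
  · exact ((continuous_apply j).comp ((continuous_apply i).comp continuous_snd))


theorem exists_measurable_argmin (N : ℕ) {V : Type} [MeasurableSpace V]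
    (Φ : V → (Fin N → ℝ) → ℝ)
    (hmeas : ∀ r, Measurable fun v => Φ v r) (hcont : ∀ v, Continuous (Φ v))
    (hcpt : ∀ v c, IsCompact {r | Φ v r ≤ c}) :
    ∃ σ : V → (Fin N → ℝ), Measurable σ ∧ ∀ v r, Φ v (σ v) ≤ Φ v r := by
  induction N generalizing V with
  | zero =>
    refine ⟨fun _ => fun i => i.elim0, measurable_const, fun v r => ?_⟩
    have : r = fun i => i.elim0 := Subsingleton.elim _ _
    rw [this]
  | succ N IH =>
    -- global minimum is attained
    have hmin : ∀ v, ∃ r, ∀ r', Φ v r ≤ Φ v r' := by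
      intro v
      have hK : IsCompact {r | Φ v r ≤ Φ v 0} := hcpt v _
      obtain ⟨r₁, hr₁K, hr₁⟩ := hK.exists_isMinOn ⟨0, by simp⟩ (hcont v).continuousOn
      refine ⟨r₁, fun r' => ?_⟩
      by_cases h : Φ v r' ≤ Φ v 0
      · exact hr₁ h
      · exact le_trans (hr₁K) (le_of_not_ge h)
    set M : V → Set (Fin (N + 1) → ℝ) := fun v => {r | ∀ r', Φ v r ≤ Φ v r'} with hM
    have hMne : ∀ v, (M v).Nonempty := hmin
    have hMcpt : ∀ v, IsCompact (M v) := by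
      intro v
      obtain ⟨r₁, hr₁⟩ := hmin v
      have : M v = {r | Φ v r ≤ Φ v r₁} := by
        ext r
        exact ⟨fun h => h r₁, fun h r' => le_trans h (hr₁ r')⟩
      rw [this]; exact hcpt v _
    set t : V → ℝ := fun v => sInf ((fun r => r 0) '' M v) with ht
    have htmem : ∀ v, ∃ r ∈ M v, r 0 = t v := by
      intro v
      have hA : IsCompact ((fun r => r 0) '' M v) := (hMcpt v).image (continuous_apply 0)
      have := hA.sInf_mem ((hMne v).image _)
      obtain ⟨r, hrM, hr0⟩ := this
      exact ⟨r, hrM, hr0⟩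
    obtain ⟨D, hDc, hDd⟩ := TopologicalSpace.exists_countable_dense (Fin (N + 1) → ℝ)
    haveI : Countable D := hDc.to_subtype
    -- measurability of t
    have htm : Measurable t := by
      apply measurable_of_Iic
      intro a
      have hkey : t ⁻¹' Iic a =
          ⋂ (ε : ℚ) (_ : 0 < ε), ⋂ (q : D), ⋃ (q' : D) (_ : (q' : Fin (N+1) → ℝ) 0 < a + ε),
            {v | Φ v q' < Φ v q + ε} := by
        ext v
        simp only [mem_preimage, mem_Iic, mem_iInter, mem_iUnion, mem_setOf_eq]
        constructor
        · intro hv ε hε q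
          obtain ⟨r₁, hr₁M, hr₁0⟩ := htmem v
          have hU : IsOpen ({x : Fin (N+1) → ℝ | x 0 < a + ε} ∩ {x | Φ v x < Φ v q + ε}) :=
            ((isOpen_Iio).preimage (continuous_apply 0)).inter ((isOpen_Iio).preimage (hcont v))
          have hr₁U : r₁ ∈ ({x : Fin (N+1) → ℝ | x 0 < a + ε} ∩ {x | Φ v x < Φ v q + ε}) := by
            constructor
            · simp only [mem_setOf_eq, hr₁0]
              have : (0:ℝ) < ε := by exact_mod_cast hε
              linarith
            · have h1 : Φ v r₁ ≤ Φ v q := hr₁M q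
              have : (0:ℝ) < ε := by exact_mod_cast hε
              simp only [mem_setOf_eq]; linarith
          obtain ⟨x, hxD, hxU⟩ := hDd.exists_mem_open hU ⟨r₁, hr₁U⟩
          exact ⟨⟨x, hxD⟩, hxU.1, hxU.2⟩
        · intro hv
          obtain ⟨r₁, hr₁⟩ := hmin v
          set μ := Φ v r₁ with hμ
          -- construct approximate minimizers
          have hseq : ∀ n : ℕ, ∃ x : Fin (N+1) → ℝ,
              x 0 < a + (1 / (n+1) : ℚ) ∧ Φ v x < μ + 2 * (1 / (n+1) : ℚ) := by
            intro n
            set ε : ℚ := 1 / (n+1) with hε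
            have hεpos : 0 < ε := by positivity
            have hεR : (0:ℝ) < ε := by exact_mod_cast hεpos
            -- find q ∈ D with Φ v q < μ + ε
            have hU : IsOpen {x : Fin (N+1) → ℝ | Φ v x < μ + ε} :=
              (isOpen_Iio).preimage (hcont v)
            obtain ⟨q, hqD, hq⟩ := hDd.exists_mem_open hU ⟨r₁, by simp only [mem_setOf_eq]; linarith⟩
            obtain ⟨q', hq'0, hq'⟩ := hv ε hεpos ⟨q, hqD⟩
            refine ⟨(q' : Fin (N+1) → ℝ), hq'0, ?_⟩
            simp only [mem_setOf_eq] at hq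
            push_cast
            push_cast at hq'0 hq'
            linarith
          choose x hx1 hx2 using hseq
          have hxK : ∀ n, x n ∈ {r | Φ v r ≤ μ + 2} := by
            intro n
            have h1 : ((1 : ℚ) / (n+1) : ℝ) ≤ 1 := by
              rw [div_le_one (by positivity)]
              push_cast; linarith [Nat.cast_nonneg (α := ℝ) n]
            have := hx2 n
            simp only [mem_setOf_eq]
            push_cast at this ⊢
            nlinarith
          obtain ⟨y, hyK, φ, hφmono, hφtend⟩ := (hcpt v (μ + 2)).tendsto_subseq hxK
          -- 1/(φ n + 1) → 0
          have hφtop : Tendsto φ atTop atTop := hφmono.tendsto_atTop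
          have hεlim : Tendsto (fun n : ℕ => ((1 : ℚ) / (φ n + 1) : ℝ)) atTop (𝓝 0) := by
            have h0 : Tendsto (fun n : ℕ => (1 : ℝ) / (n + 1)) atTop (𝓝 0) :=
              tendsto_one_div_add_atTop_nhds_zero_nat
            have := h0.comp hφtop
            refine this.congr (fun n => ?_)
            push_cast; rfl
          have hyM : y ∈ M v := by
            have hΦlim : Tendsto (fun n => Φ v (x (φ n))) atTop (𝓝 (Φ v y)) :=
              ((hcont v).tendsto y).comp hφtend
            have hglim : Tendsto (fun n => μ + 2 * ((1 : ℚ) / (φ n + 1) : ℝ)) atTop (𝓝 (μ + 2 * 0)) :=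
              tendsto_const_nhds.add (hεlim.const_mul 2)
            have hΦy : Φ v y ≤ μ + 2 * 0 := by
              refine le_of_tendsto_of_tendsto' hΦlim hglim (fun n => ?_)
              have := hx2 (φ n)
              push_cast at this ⊢
              linarith
            intro r'
            calc Φ v y ≤ μ := by linarith
            _ ≤ Φ v r' := hr₁ r'
          have hy0 : y 0 ≤ a := by
            have h0lim : Tendsto (fun n => x (φ n) 0) atTop (𝓝 (y 0)) :=
              ((continuous_apply 0).tendsto y).comp hφtend
            have hglim : Tendsto (fun n => a + ((1 : ℚ) / (φ n + 1) : ℝ)) atTop (𝓝 (a + 0)) :=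
              tendsto_const_nhds.add hεlim
            have : y 0 ≤ a + 0 := by
              refine le_of_tendsto_of_tendsto' h0lim hglim (fun n => ?_)
              have := hx1 (φ n)
              push_cast at this ⊢
              linarith
            linarith
          have hbdd : BddBelow ((fun r => r 0) '' M v) :=
            ((hMcpt v).image (continuous_apply 0)).bddBelow
          calc t v ≤ y 0 := csInf_le hbdd ⟨y, hyM, rfl⟩
          _ ≤ a := hy0
      rw [hkey]
      refine MeasurableSet.iInter fun ε => MeasurableSet.iInter fun _ =>
        MeasurableSet.iInter fun q => MeasurableSet.iUnion fun q' =>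
        MeasurableSet.iUnion fun _ => ?_
      have : {v | Φ v (q' : Fin (N+1) → ℝ) < Φ v (q : Fin (N+1) → ℝ) + ε} =
          (fun v => Φ v q' - Φ v q) ⁻¹' Iio (ε : ℝ) := by
        ext v; simp [sub_lt_iff_lt_add']
      rw [this]
      exact ((hmeas _).sub (hmeas _)) measurableSet_Iio
    -- joint measurability helper
    have hunc : Measurable (Function.uncurry fun (r : Fin (N+1) → ℝ) (v : V) => Φ v r) :=
      measurable_uncurry_of_continuous_of_measurable (fun v => hcont v) hmeas
    -- the reduced functional
    set Φ' : V → (Fin N → ℝ) → ℝ := fun v y => Φ v (Fin.cons (t v) y) with hΦ'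
    have hconsm : ∀ y : Fin N → ℝ, Measurable fun v => (Fin.cons (t v) y : Fin (N+1) → ℝ) := by
      intro y
      rw [measurable_pi_iff]
      intro i
      refine Fin.cases ?_ ?_ i
      · simpa using htm
      · intro j; simp only [Fin.cons_succ]; exact measurable_const
    have hmeas' : ∀ y, Measurable fun v => Φ' v y := by
      intro y
      have : (fun v => Φ' v y) =
          (Function.uncurry fun (r : Fin (N+1) → ℝ) (v : V) => Φ v r) ∘
            fun v => ((Fin.cons (t v) y : Fin (N+1) → ℝ), v) := rfl
      rw [this]
      exact hunc.comp ((hconsm y).prodMk measurable_id)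
    have hconsc : ∀ c : ℝ, Continuous fun y : Fin N → ℝ => (Fin.cons c y : Fin (N+1) → ℝ) := by
      intro c
      apply continuous_pi
      intro i
      refine Fin.cases ?_ ?_ i
      · simpa using continuous_const
      · intro j; simp only [Fin.cons_succ]; exact continuous_apply j
    have hcont' : ∀ v, Continuous (Φ' v) := fun v => (hcont v).comp (hconsc (t v))
    have hcpt' : ∀ v c, IsCompact {y | Φ' v y ≤ c} := by
      intro v c
      obtain ⟨R, hR⟩ := (hcpt v c).isBounded.subset_closedBall 0
      have hsub : {y | Φ' v y ≤ c} ⊆ Metric.closedBall 0 (max R 0) := by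
        intro y hy
        rw [Metric.mem_closedBall, dist_zero_right]
        rw [pi_norm_le_iff_of_nonneg (le_max_right R 0)]
        intro i
        have h1 : (Fin.cons (t v) y : Fin (N+1) → ℝ) ∈ Metric.closedBall 0 R := hR hy
        rw [Metric.mem_closedBall, dist_zero_right] at h1
        calc ‖y i‖ = ‖(Fin.cons (t v) y : Fin (N+1) → ℝ) i.succ‖ := by rw [Fin.cons_succ]
        _ ≤ ‖(Fin.cons (t v) y : Fin (N+1) → ℝ)‖ := norm_le_pi_norm _ _
        _ ≤ R := h1
        _ ≤ max R 0 := le_max_left R 0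
      have hcl : IsClosed {y | Φ' v y ≤ c} := isClosed_Iic.preimage (hcont' v)
      exact (isCompact_closedBall 0 (max R 0)).of_isClosed_subset hcl hsub
    obtain ⟨σ', hσ'm, hσ'min⟩ := IH Φ' hmeas' hcont' hcpt'
    refine ⟨fun v => Fin.cons (t v) (σ' v), ?_, ?_⟩
    · rw [measurable_pi_iff]
      intro i
      refine Fin.cases ?_ ?_ i
      · simpa using htm
      · intro j
        simp only [Fin.cons_succ]
        exact (measurable_pi_apply j).comp hσ'm
    · intro v r
      obtain ⟨r₁, hr₁M, hr₁0⟩ := htmem v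
      have h1 : Φ' v (σ' v) ≤ Φ' v (Fin.tail r₁) := hσ'min v (Fin.tail r₁)
      have h2 : (Fin.cons (t v) (Fin.tail r₁) : Fin (N+1) → ℝ) = r₁ := by
        rw [← hr₁0]; exact Fin.cons_self_tail r₁
      simp only [hΦ', h2] at h1
      exact le_trans h1 (hr₁M r)

-- transfer to the matrix-shaped space
theorem exists_measurable_argmin' (a b : ℕ) {V : Type} [MeasurableSpace V]
    (Φ : V → (Fin a → Fin b → ℝ) → ℝ)
    (hmeas : ∀ r, Measurable fun v => Φ v r) (hcont : ∀ v, Continuous (Φ v))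
    (hcpt : ∀ v c, IsCompact {r | Φ v r ≤ c}) :
    ∃ σ : V → (Fin a → Fin b → ℝ), Measurable σ ∧ ∀ v r, Φ v (σ v) ≤ Φ v r := by
  -- identify (Fin a → Fin b → ℝ) with (Fin (a*b) → ℝ)
  let e : (Fin a → Fin b → ℝ) ≃ (Fin (a * b) → ℝ) :=
    (Equiv.curry _ _ _).symm.trans (Equiv.arrowCongr finProdFinEquiv (Equiv.refl ℝ))
  have hecont : Continuous e := by
    apply continuous_pi
    intro i
    show Continuous fun r : Fin a → Fin b → ℝ => r (finProdFinEquiv.symm i).1 (finProdFinEquiv.symm i).2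
    exact (continuous_apply _).comp (continuous_apply _)
  have hesymmcont : Continuous e.symm := by
    apply continuous_pi
    intro i
    apply continuous_pi
    intro j
    show Continuous fun y : Fin (a * b) → ℝ => y (finProdFinEquiv (i, j))
    exact continuous_apply _
  obtain ⟨σ, hσm, hσmin⟩ := exists_measurable_argmin (a * b)
    (fun v y => Φ v (e.symm y))
    (fun y => hmeas (e.symm y))
    (fun v => (hcont v).comp hesymmcont)
    (by
      intro v c
      have : {y | Φ v (e.symm y) ≤ c} = e '' {r | Φ v r ≤ c} := by
        ext y
        simp only [mem_setOf_eq, mem_image]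
        constructor
        · intro h; exact ⟨e.symm y, h, by simp⟩
        · rintro ⟨r, hr, rfl⟩; simpa using hr
      rw [this]
      exact (hcpt v c).image hecont)
  refine ⟨fun v => e.symm (σ v), ?_, ?_⟩
  · exact (hesymmcont.measurable).comp hσm
  · intro v r
    have := hσmin v (e r)
    simpa using this

/-- for `W` continuous with `p`-growth and `p`-coercivity and
`G ∈ L^p(Ω; ℝ^{n×(n−k)})` measurable on a bounded measurable `Ω`, there exists a
measurable `r₀ ∈ L^p(Ω; ℝ^{n×k})` with `W(G(x)|r₀(x)) = min_r W(G(x)|r)` a.e. -/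
theorem stmt13 (d m k : ℕ) (W : (Fin (m + k) → Fin m ⊕ Fin k → ℝ) → ℝ)
    (hWcont : Continuous W)
    (α β C p : ℝ) (hα : 0 < α) (hβ : 0 ≤ β) (hp : 1 < p)
    (hcoer : ∀ Q, α * ‖Q‖ ^ p - β ≤ W Q)
    (hgrowth : ∀ Q, |W Q| ≤ C * (1 + ‖Q‖ ^ p))
    (Ω : Set (Fin d → ℝ)) (hΩmeas : MeasurableSet Ω) (hΩbdd : Bornology.IsBounded Ω)
    (G : (Fin d → ℝ) → (Fin (m + k) → Fin m → ℝ)) (hGmeas : Measurable G)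
    (hGLp : MemLp G (ENNReal.ofReal p) (volume.restrict Ω)) :
    ∃ r₀ : (Fin d → ℝ) → (Fin (m + k) → Fin k → ℝ), Measurable r₀ ∧
      MemLp r₀ (ENNReal.ofReal p) (volume.restrict Ω) ∧
      ∀ᵐ x ∂(volume.restrict Ω), ∀ r : Fin (m + k) → Fin k → ℝ,
        W (juxt m k (G x) (r₀ x)) ≤ W (juxt m k (G x) r) := by
  have hp0 : (0:ℝ) < p := lt_trans one_pos hp
  have hC : 0 ≤ C := by
    have h := hgrowth 0
    rw [norm_zero, Real.zero_rpow hp0.ne'] at h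
    calc (0:ℝ) ≤ |W 0| := abs_nonneg _
    _ ≤ C * (1 + 0) := h
    _ = C := by ring
  -- the parametrized functional
  set Φ : (Fin (m + k) → Fin m → ℝ) → (Fin (m + k) → Fin k → ℝ) → ℝ :=
    fun v r => W (juxt m k v r) with hΦ
  have hΦcont : Continuous fun pr : (Fin (m + k) → Fin m → ℝ) × (Fin (m + k) → Fin k → ℝ) =>
      Φ pr.1 pr.2 := hWcont.comp (juxt_continuous m k)
  obtain ⟨σ, hσm, hσmin⟩ := exists_measurable_argmin' (m + k) k Φ
    (fun r => (hΦcont.comp (Continuous.prodMk_left r)).measurable)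
    (fun v => hΦcont.comp (Continuous.prodMk_right v))
    (by
      intro v c
      have hcl : IsClosed {r | Φ v r ≤ c} :=
        isClosed_Iic.preimage (hΦcont.comp (Continuous.prodMk_right v))
      set R : ℝ := (max ((c + β) / α) 0) ^ p⁻¹ with hR
      have hsub : {r | Φ v r ≤ c} ⊆ Metric.closedBall 0 R := by
        intro r hr
        rw [Metric.mem_closedBall, dist_zero_right]
        have h1 : α * ‖juxt m k v r‖ ^ p - β ≤ c := le_trans (hcoer _) hr
        have h2 : ‖juxt m k v r‖ ^ p ≤ (c + β) / α := by
          rw [le_div_iff₀ hα]; linarith [mul_comm α (‖juxt m k v r‖ ^ p)]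
        have h3 : ‖r‖ ^ p ≤ max ((c + β) / α) 0 := by
          calc ‖r‖ ^ p ≤ ‖juxt m k v r‖ ^ p :=
            Real.rpow_le_rpow (norm_nonneg _) (norm_le_juxt m k v r) hp0.le
          _ ≤ (c + β) / α := h2
          _ ≤ max _ _ := le_max_left _ _
        calc ‖r‖ = (‖r‖ ^ p) ^ p⁻¹ := (Real.rpow_rpow_inv (norm_nonneg _) hp0.ne').symm
        _ ≤ R := Real.rpow_le_rpow (Real.rpow_nonneg (norm_nonneg _) _) h3 (by positivity)
      exact (isCompact_closedBall 0 R).of_isClosed_subset hcl hsub)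
  refine ⟨fun x => σ (G x), hσm.comp hGmeas, ?_, ?_⟩
  · -- MemLp
    haveI : IsFiniteMeasure (volume.restrict Ω) :=
      ⟨by rw [Measure.restrict_apply_univ]; exact hΩbdd.measure_lt_top⟩
    have hne0 : ENNReal.ofReal p ≠ 0 := by
      simp only [ne_eq, ENNReal.ofReal_eq_zero, not_le]; exact hp0
    have hnetop : ENNReal.ofReal p ≠ ⊤ := ENNReal.ofReal_ne_top
    have htoR : (ENNReal.ofReal p).toReal = p := ENNReal.toReal_ofReal hp0.le
    have hbound : ∀ x, ‖σ (G x)‖ ^ p ≤ (β + C) / α + (C / α) * ‖G x‖ ^ p := by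
      intro x
      have h1 : α * ‖σ (G x)‖ ^ p - β ≤ α * ‖juxt m k (G x) (σ (G x))‖ ^ p - β := by
        have := Real.rpow_le_rpow (norm_nonneg _) (norm_le_juxt m k (G x) (σ (G x))) hp0.le
        nlinarith
      have h2 : α * ‖juxt m k (G x) (σ (G x))‖ ^ p - β ≤ W (juxt m k (G x) (σ (G x))) :=
        hcoer _
      have h3 : W (juxt m k (G x) (σ (G x))) ≤ W (juxt m k (G x) 0) := hσmin (G x) 0
      have h4 : W (juxt m k (G x) 0) ≤ C * (1 + ‖juxt m k (G x) 0‖ ^ p) :=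
        le_trans (le_abs_self _) (hgrowth _)
      have h5 : C * (1 + ‖juxt m k (G x) 0‖ ^ p) ≤ C * (1 + ‖G x‖ ^ p) := by
        have := Real.rpow_le_rpow (norm_nonneg _) (juxt_zero_norm_le m k (G x)) hp0.le
        nlinarith
      have h6 : α * ‖σ (G x)‖ ^ p ≤ β + C + C * ‖G x‖ ^ p := by linarith
      have h7 : ‖σ (G x)‖ ^ p ≤ (β + C + C * ‖G x‖ ^ p) / α := by
        rw [le_div_iff₀ hα]; linarith [mul_comm α (‖σ (G x)‖ ^ p)]
      have h8 : (β + C + C * ‖G x‖ ^ p) / α = (β + C) / α + C / α * ‖G x‖ ^ p := by ring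
      linarith
    have hGp1 : MemLp (fun x => ‖G x‖ ^ p) 1 (volume.restrict Ω) := by
      have := hGLp.norm_rpow hne0 hnetop
      rwa [htoR] at this
    have hg : MemLp (fun x => (β + C) / α + (C / α) * ‖G x‖ ^ p) 1 (volume.restrict Ω) :=
      MemLp.add (f := fun _ => (β + C) / α) (g := fun x => C / α * ‖G x‖ ^ p)
        (memLp_const _) (hGp1.const_mul _)
    have hr₀meas : Measurable fun x => σ (G x) := hσm.comp hGmeas
    have hr₀p1 : MemLp (fun x => ‖σ (G x)‖ ^ p) 1 (volume.restrict Ω) := by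
      have hrpc : Continuous fun y : ℝ => y ^ p :=
        continuous_id.rpow_const fun _ => Or.inr hp0.le
      refine hg.of_le ((hrpc.measurable.comp hr₀meas.norm).aestronglyMeasurable) ?_
      refine Filter.Eventually.of_forall fun x => ?_
      rw [Real.norm_of_nonneg (Real.rpow_nonneg (norm_nonneg _) _)]
      exact le_trans (hbound x) (le_abs_self _)
    have := memLp_norm_rpow_iff (p := ENNReal.ofReal p) (μ := volume.restrict Ω)
      (q := ENNReal.ofReal p) (hr₀meas.aestronglyMeasurable) hne0 hnetop
    rw [htoR, ENNReal.div_self hne0 hnetop] at this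
    exact this.mp hr₀p1
  · exact Filter.Eventually.of_forall fun x r => hσmin (G x) r
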